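/- Let $\phi:X\to(-\infty,+\infty]$ be proper, $x\in X$, $\tau>0$, $\eta\ge0$, and suppose $x_{\tau,\eta}\in X$ satisfies $\frac1{2\tau}d(x,x_{\tau,\eta})^2+\phi(x_{\tau,\eta})\le\frac1{2\tau}d(x,y)^2+\phi(y)+\frac\eta2 d(x,x_{\tau,\eta})\,d(y,x_{\tau,\eta})$ for every $y\in X$. Then the global $(-1/\tau)$-slope satisfies $|\partial^{-1/\tau}\phi|(x_{\tau,\eta})\le (1+\tfrac12\eta\tau)\,\frac{d(x,x_{\tau,\eta})}{\tau}$; in particular the metric slope $|\partial\phi|(x_{\tau,\eta})$ is finite and bounded by the same quantity. -/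

import Mathlib

open Filter in
/-- The metric slope `|∂φ|(x)` of an extended-real functional. -/
noncomputable def metricSlope {X : Type*} [MetricSpace X] (φ : X → EReal) (x : X) : EReal :=
  if φ x = ⊤ then ⊤ else
    max 0 (Filter.limsup (fun y => (max (φ x - φ y) 0) / ((dist x y : ℝ) : EReal))
      (nhdsWithin x {x}ᶜ))

/-- The global `λ`-slope `|∂^λ φ|(x)`. -/
noncomputable def globalSlope {X : Type*} [MetricSpace X] (φ : X → EReal) (lam : ℝ) (x : X) :
    EReal :=
  if φ x = ⊤ then ⊤ else
    max 0 (⨆ y ∈ {y : X | y ≠ x},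
      (max (φ x - φ y + ((lam / 2 * dist x y ^ 2 : ℝ) : EReal)) 0) / ((dist x y : ℝ) : EReal))

theorem stmt4 {X : Type*} [MetricSpace X] (φ : X → EReal)
    (hbot : ∀ y, φ y ≠ ⊥) (hproper : ∃ y, φ y ≠ ⊤)
    (x xτη : X) (τ η : ℝ) (hτ : 0 < τ) (hη : 0 ≤ η)
    (hres : ∀ y : X,
      ((1 / (2 * τ) * dist x xτη ^ 2 : ℝ) : EReal) + φ xτη ≤
        ((1 / (2 * τ) * dist x y ^ 2 : ℝ) : EReal) + φ y +
          ((η / 2 * dist x xτη * dist y xτη : ℝ) : EReal)) :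
    globalSlope φ (-1 / τ) xτη ≤ (((1 + η * τ / 2) * (dist x xτη / τ) : ℝ) : EReal) ∧
    metricSlope φ xτη ≤ (((1 + η * τ / 2) * (dist x xτη / τ) : ℝ) : EReal) := by
  set a := dist x xτη with ha
  set S := (1 + η * τ / 2) * (a / τ) with hSdef
  have ha0 : 0 ≤ a := dist_nonneg
  have hS : 0 ≤ S := by
    apply mul_nonneg
    · nlinarith
    · positivity
  -- φ xτη is finite
  obtain ⟨y₀, hy₀⟩ := hproper
  have hφtop : φ xτη ≠ ⊤ := by
    intro h
    have h1 := hres y₀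
    rw [h] at h1
    obtain ⟨r₀, hr₀⟩ : ∃ r : ℝ, φ y₀ = (r : EReal) :=
      ⟨(φ y₀).toReal, (EReal.coe_toReal hy₀ (hbot y₀)).symm⟩
    rw [hr₀] at h1
    rw [EReal.add_top_of_ne_bot (EReal.coe_ne_bot _)] at h1
    rw [← EReal.coe_add, ← EReal.coe_add] at h1
    exact (EReal.coe_lt_top _).not_ge h1
  -- key inequality
  have key2 : ∀ y : X, φ xτη - φ y ≤
      (((S * dist xτη y + dist xτη y ^ 2 / (2 * τ)) : ℝ) : EReal) := by
    intro y
    by_cases hy : φ y = ⊤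
    · rw [hy, EReal.sub_top]; exact bot_le
    · obtain ⟨r, hr⟩ : ∃ r : ℝ, φ xτη = (r : EReal) :=
        ⟨(φ xτη).toReal, (EReal.coe_toReal hφtop (hbot xτη)).symm⟩
      obtain ⟨ry, hry⟩ : ∃ r : ℝ, φ y = (r : EReal) :=
        ⟨(φ y).toReal, (EReal.coe_toReal hy (hbot y)).symm⟩
      rw [hr, hry, ← EReal.coe_sub, EReal.coe_le_coe_iff]
      have h1 := hres y
      rw [hr, hry] at h1
      rw [← EReal.coe_add, ← EReal.coe_add, ← EReal.coe_add, EReal.coe_le_coe_iff] at h1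
      set d := dist xτη y with hdd
      set dxy := dist x y with hdxyd
      have hdxy2 : dxy ^ 2 ≤ (a + d) ^ 2 := by
        apply pow_le_pow_left₀ dist_nonneg
        exact dist_triangle x xτη y
      have hdc : dist y xτη = d := dist_comm y xτη
      rw [hdc] at h1
      have hd0 : 0 ≤ d := dist_nonneg
      have hτne : τ ≠ 0 := hτ.ne'
      have h2τ : (0:ℝ) < 2 * τ := by linarith
      rw [← mul_le_mul_iff_right₀ h2τ]
      have h1' := (mul_le_mul_iff_right₀ h2τ).2 h1
      have e1 : 2 * τ * (1 / (2*τ) * a^2) = a^2 := by field_simp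
      have e2 : 2 * τ * (1 / (2*τ) * dxy^2) = dxy^2 := by field_simp
      have e3 : 2 * τ * ((1 + η * τ / 2) * (a / τ)) = (2 + η * τ) * a := by field_simp
      have e4 : 2 * τ * (d ^ 2 / (2 * τ)) = d ^ 2 := by field_simp
      rw [hSdef]
      nlinarith [hdxy2, h1', e1, e2, e3, e4]
  constructor
  · -- global slope
    rw [globalSlope, if_neg hφtop]
    apply max_le (EReal.coe_nonneg.2 hS)
    apply iSup₂_le
    intro y hy
    have hyne : y ≠ xτη := hy
    have hd : 0 < dist xτη y := dist_pos.2 (Ne.symm hyne)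
    rw [EReal.div_le_iff_le_mul (by exact_mod_cast hd) (EReal.coe_ne_top _), ← EReal.coe_mul]
    apply max_le
    · have h2 := add_le_add_left (key2 y)
        (((-1 / τ / 2 * dist xτη y ^ 2 : ℝ)) : EReal)
      rw [← EReal.coe_add] at h2
      refine h2.trans (le_of_eq ?_)
      rw [EReal.coe_eq_coe_iff]
      have hτne : τ ≠ 0 := hτ.ne'
      field_simp
      ring
    · exact EReal.coe_nonneg.2 (mul_nonneg hd.le hS)
  · -- metric slope
    rw [metricSlope, if_neg hφtop]
    apply max_le (EReal.coe_nonneg.2 hS)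
    refine EReal.le_of_forall_lt_iff_le.1 fun z hz => ?_
    have hzS : S < z := by exact_mod_cast hz
    apply Filter.limsup_le_of_le (by isBoundedDefault)
    have hε : 0 < τ * (z - S) := by nlinarith
    filter_upwards [self_mem_nhdsWithin,
      mem_nhdsWithin_of_mem_nhds (Metric.ball_mem_nhds xτη hε)] with y hyne hyball
    have hyne' : y ≠ xτη := hyne
    have hd : 0 < dist xτη y := dist_pos.2 (Ne.symm hyne')
    have hdlt : dist xτη y < τ * (z - S) := by
      rw [dist_comm]; exact hyball
    rw [EReal.div_le_iff_le_mul (by exact_mod_cast hd) (EReal.coe_ne_top _), ← EReal.coe_mul]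
    apply max_le
    · refine (key2 y).trans ?_
      rw [EReal.coe_le_coe_iff]
      have h2τ : (0:ℝ) < 2 * τ := by linarith
      have hstep : dist xτη y ^ 2 / (2 * τ) ≤ dist xτη y * (z - S) / 2 := by
        rw [div_le_div_iff₀ h2τ two_pos]
        nlinarith [mul_lt_mul_of_pos_left hdlt hd]
      nlinarith [hstep, mul_pos hd (sub_pos.2 hzS)]
    · exact EReal.coe_nonneg.2 (mul_nonneg hd.le (hS.trans hzS.le))
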